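/- Let G be a tree with distance δ, and let S₁, S₂ be subtrees with S₁ ∩ S₂ = ∅ but S₁^[1] ∩ S₂^[1] ≠ ∅, where S^[1] denotes the set of vertices at distance at most 1 from S. Then S₁^[1] ∩ S₂^[1] consists of either a single vertex or two adjacent vertices (a path of length 1). -/

import Mathlib

open SimpleGraph Walk

section helpers
variable {V : Type*} {G : SimpleGraph V}

private lemma concat_path' {u v w : V} {p : G.Walk u v} (hp : p.IsPath) (h : G.Adj v w)
    (hw : w ∉ p.support) : (p.concat h).IsPath := by
  rw [← isPath_reverse_iff, reverse_concat]
  exact hp.reverse.cons (by simpa using hw)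

private lemma exists_path_in {S : Set V} (h : (G.induce S).Connected)
    {a a' : V} (ha : a ∈ S) (ha' : a' ∈ S) :
    ∃ p : G.Walk a a', p.IsPath ∧ ∀ v ∈ p.support, v ∈ S := by
  classical
  obtain ⟨w⟩ := h.preconnected ⟨a, ha⟩ ⟨a', ha'⟩
  let f : G.induce S →g G := ⟨Subtype.val, fun {x y} h => h⟩
  refine ⟨(w.map f).toPath, (w.map f).toPath.2, fun v hv => ?_⟩
  have := (w.map f).support_toPath_subset hv
  rw [Walk.support_map] at this
  obtain ⟨⟨x, hx⟩, -, rfl⟩ := List.mem_map.mp this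
  exact hx

private lemma paths_eq (hG : G.IsTree) {u v : V} {p q : G.Walk u v}
    (hp : p.IsPath) (hq : q.IsPath) : p = q := by
  obtain ⟨r, -, hr⟩ := hG.existsUnique_path u v
  rw [hr p hp, hr q hq]

variable {S₁ S₂ : Set V} (hG : G.IsTree)
  (h1 : (G.induce S₁).Connected) (h2 : (G.induce S₂).Connected)
  (hd : ∀ v, v ∈ S₁ → v ∈ S₂ → False)

include hG h1 h2 hd

private lemma edge_unique {a b a' b' : V} (ha : a ∈ S₁) (hb : b ∈ S₂)
    (ha' : a' ∈ S₁) (hb' : b' ∈ S₂) (e : G.Adj a b) (e' : G.Adj a' b') :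
    a = a' ∧ b = b' := by
  have haa : a = a' := by
    by_contra haa
    obtain ⟨p2, hp2, hs2⟩ := exists_path_in h2 hb hb'
    obtain ⟨p1, hp1, hs1⟩ := exists_path_in h1 ha ha'
    have hinner : (p2.concat e'.symm).IsPath :=
      concat_path' hp2 e'.symm (fun h => hd a' ha' (hs2 a' h))
    have hP2 : (Walk.cons e (p2.concat e'.symm)).IsPath := by
      refine hinner.cons ?_
      rw [support_concat, List.mem_append]
      rintro (h | h)
      · exact hd a ha (hs2 a h)
      · simp only [List.mem_singleton] at h; exact haa h
    have := paths_eq hG hp1 hP2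
    have hbmem : b ∈ p1.support := by
      rw [this]
      simp [support_concat]
    exact hd b (hs1 b hbmem) hb
  subst haa
  by_contra hbb
  obtain ⟨p2, hp2, hs2⟩ := exists_path_in h2 hb hb'
  have hP2 : (Walk.cons e.symm (Walk.cons e' Walk.nil)).IsPath := by
    refine IsPath.cons (IsPath.cons (IsPath.nil) ?_) ?_
    · simp only [support_nil, List.mem_singleton]
      exact fun h => hd a ha (h ▸ hb')
    · simp only [support_cons, support_nil, List.mem_cons, List.mem_singleton]
      rintro (h | h | h)
      · exact e.ne' h
      · exact hbb (by simp [h])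
      · exact absurd h List.not_mem_nil
  have := paths_eq hG hp2 hP2
  have : a ∈ p2.support := by rw [this]; simp
  exact hd a ha (hs2 a this)

private lemma no_outside_when_edge {a b x p q : V} (ha : a ∈ S₁) (hb : b ∈ S₂)
    (e : G.Adj a b) (hx1 : x ∉ S₁) (hx2 : x ∉ S₂) (hp : p ∈ S₁) (hq : q ∈ S₂)
    (e1 : G.Adj x p) (e2 : G.Adj x q) : False := by
  obtain ⟨p1, hp1, hs1⟩ := exists_path_in h1 hp ha
  obtain ⟨p2, hp2, hs2⟩ := exists_path_in h2 hq hb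
  have hP1 : (Walk.cons e1 p1).IsPath := hp1.cons (fun h => hx1 (hs1 x h))
  have hinner : (p2.concat e.symm).IsPath :=
    concat_path' hp2 e.symm (fun h => hd a ha (hs2 a h))
  have hP2 : (Walk.cons e2 (p2.concat e.symm)).IsPath := by
    refine hinner.cons ?_
    rw [support_concat, List.mem_append]
    rintro (h | h)
    · exact hx2 (hs2 x h)
    · simp only [List.mem_singleton] at h; exact hx1 (h ▸ ha)
  have heq := paths_eq hG hP1 hP2
  have hqmem : q ∈ (Walk.cons e1 p1).support := by
    rw [heq]; simp [support_concat]
  rw [support_cons, List.mem_cons] at hqmem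
  rcases hqmem with h | h
  · exact e2.ne' h
  · exact hd q (hs1 q h) hq

private lemma mid_unique {m m' p q p' q' : V}
    (hm1 : m ∉ S₁) (hm2 : m ∉ S₂) (hm1' : m' ∉ S₁) (hm2' : m' ∉ S₂)
    (hp : p ∈ S₁) (hq : q ∈ S₂) (hp' : p' ∈ S₁) (hq' : q' ∈ S₂)
    (e1 : G.Adj m p) (e2 : G.Adj m q) (e1' : G.Adj m' p') (e2' : G.Adj m' q') :
    m = m' := by
  by_contra hmm
  obtain ⟨p1, hp1, hs1⟩ := exists_path_in h1 hp hp'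
  obtain ⟨p2, hp2, hs2⟩ := exists_path_in h2 hq hq'
  have hi1 : (p1.concat e1'.symm).IsPath :=
    concat_path' hp1 e1'.symm (fun h => hm1' (hs1 m' h))
  have hi2 : (p2.concat e2'.symm).IsPath :=
    concat_path' hp2 e2'.symm (fun h => hm2' (hs2 m' h))
  have hP1 : (Walk.cons e1 (p1.concat e1'.symm)).IsPath := by
    refine hi1.cons ?_
    rw [support_concat, List.mem_append]
    rintro (h | h)
    · exact hm1 (hs1 m h)
    · simp only [List.mem_singleton] at h; exact hmm h
  have hP2 : (Walk.cons e2 (p2.concat e2'.symm)).IsPath := by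
    refine hi2.cons ?_
    rw [support_concat, List.mem_append]
    rintro (h | h)
    · exact hm2 (hs2 m h)
    · simp only [List.mem_singleton] at h; exact hmm h
  have heq := paths_eq hG hP1 hP2
  have hpmem : p ∈ (Walk.cons e2 (p2.concat e2'.symm)).support := by
    rw [← heq]; simp [support_concat]
  rw [support_cons, List.mem_cons] at hpmem
  rcases hpmem with h | h
  · exact e1.ne' h
  · rw [support_concat, List.mem_append] at h
    rcases h with h | h
    · exact hd p hp (hs2 p h)
    · simp only [List.mem_singleton] at h; exact hm1' (h ▸ hp)

end helpers

theorem stmt_2 {V : Type*} (G : SimpleGraph V) (hG : G.IsTree)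
    (S₁ S₂ : Set V) (h1ne : S₁.Nonempty) (h2ne : S₂.Nonempty)
    (h1 : (G.induce S₁).Connected) (h2 : (G.induce S₂).Connected)
    (hdisj : S₁ ∩ S₂ = ∅)
    (hne : ({x : V | ∃ y ∈ S₁, G.dist x y ≤ 1} ∩ {x : V | ∃ y ∈ S₂, G.dist x y ≤ 1}).Nonempty) :
    (∃ x : V, {x' : V | ∃ y ∈ S₁, G.dist x' y ≤ 1} ∩ {x' : V | ∃ y ∈ S₂, G.dist x' y ≤ 1} = {x}) ∨
    (∃ x y : V, G.Adj x y ∧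
      {x' : V | ∃ y' ∈ S₁, G.dist x' y' ≤ 1} ∩ {x' : V | ∃ y' ∈ S₂, G.dist x' y' ≤ 1} = {x, y}) := by
  have hc : G.Connected := hG.isConnected
  have hd : ∀ v, v ∈ S₁ → v ∈ S₂ → False := by
    intro v hv1 hv2
    rw [Set.eq_empty_iff_forall_notMem] at hdisj
    exact hdisj v ⟨hv1, hv2⟩
  have hmem : ∀ (S : Set V) (x : V), (∃ y ∈ S, G.dist x y ≤ 1) ↔
      (x ∈ S ∨ ∃ y ∈ S, G.Adj x y) := by
    intro S x
    constructor
    · rintro ⟨y, hy, hle⟩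
      rcases Nat.le_one_iff_eq_zero_or_eq_one.mp hle with h | h
      · exact Or.inl ((hc.dist_eq_zero_iff.mp h) ▸ hy)
      · exact Or.inr ⟨y, hy, dist_eq_one_iff_adj.mp h⟩
    · rintro (h | ⟨y, hy, hadj⟩)
      · exact ⟨x, h, by rw [SimpleGraph.dist_self]; omega⟩
      · exact ⟨y, hy, (dist_eq_one_iff_adj.mpr hadj).le⟩
  by_cases hedge : ∃ a ∈ S₁, ∃ b ∈ S₂, G.Adj a b
  · obtain ⟨a, ha, b, hb, e⟩ := hedge
    right
    refine ⟨a, b, e, ?_⟩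
    ext x
    simp only [Set.mem_inter_iff, Set.mem_setOf_eq, Set.mem_insert_iff, Set.mem_singleton_iff]
    constructor
    · rintro ⟨hx1, hx2⟩
      rw [hmem] at hx1 hx2
      by_cases hxs1 : x ∈ S₁
      · rcases hx2 with hxs2 | ⟨q, hq, hadj⟩
        · exact absurd hxs2 (fun h => hd x hxs1 h)
        · exact Or.inl (edge_unique hG h1 h2 hd hxs1 hq ha hb hadj e).1
      · by_cases hxs2 : x ∈ S₂
        · rcases hx1 with h | ⟨p, hp, hadj⟩
          · exact absurd h hxs1
          · exact Or.inr (edge_unique hG h1 h2 hd hp hxs2 ha hb hadj.symm e).2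
        · rcases hx1 with h | ⟨p, hp, hadj1⟩
          · exact absurd h hxs1
          rcases hx2 with h | ⟨q, hq, hadj2⟩
          · exact absurd h hxs2
          exact absurd (no_outside_when_edge hG h1 h2 hd ha hb e hxs1 hxs2 hp hq hadj1 hadj2)
            (fun h => h)
    · rintro (rfl | rfl)
      · exact ⟨(hmem S₁ x).mpr (Or.inl ha), (hmem S₂ x).mpr (Or.inr ⟨b, hb, e⟩)⟩
      · exact ⟨(hmem S₁ x).mpr (Or.inr ⟨a, ha, e.symm⟩), (hmem S₂ x).mpr (Or.inl hb)⟩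
  · push_neg at hedge
    obtain ⟨m, hm⟩ := hne
    left
    refine ⟨m, ?_⟩
    have key : ∀ z, z ∈ ({x : V | ∃ y ∈ S₁, G.dist x y ≤ 1} ∩
        {x : V | ∃ y ∈ S₂, G.dist x y ≤ 1}) →
        z ∉ S₁ ∧ z ∉ S₂ ∧ (∃ p ∈ S₁, G.Adj z p) ∧ (∃ q ∈ S₂, G.Adj z q) := by
      rintro z ⟨hz1, hz2⟩
      rw [Set.mem_setOf_eq, hmem] at hz1 hz2
      have hzs1 : z ∉ S₁ := by
        intro h
        rcases hz2 with h2 | ⟨q, hq, hadj⟩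
        · exact hd z h h2
        · exact hedge z h q hq hadj
      have hzs2 : z ∉ S₂ := by
        intro h
        rcases hz1 with h1 | ⟨p, hp, hadj⟩
        · exact hd z h1 h
        · exact hedge p hp z h hadj.symm
      rcases hz1 with h | hz1
      · exact absurd h hzs1
      rcases hz2 with h | hz2
      · exact absurd h hzs2
      exact ⟨hzs1, hzs2, hz1, hz2⟩
    obtain ⟨hm1, hm2, ⟨p', hp', e1'⟩, ⟨q', hq', e2'⟩⟩ := key m hm
    ext x
    simp only [Set.mem_inter_iff, Set.mem_setOf_eq, Set.mem_singleton_iff]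
    constructor
    · intro hx
      obtain ⟨hx1, hx2, ⟨p, hp, e1⟩, ⟨q, hq, e2⟩⟩ := key x hx
      exact mid_unique hG h1 h2 hd hx1 hx2 hm1 hm2 hp hq hp' hq' e1 e2 e1' e2'
    · rintro rfl
      exact hm
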